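/- Let g be the 4-dimensional Lie algebra with basis {s, z, d₁, d₂} and nonzero brackets [s,d₁]=d₂, [s,d₂]=−d₁ (z central). The bivector r = z∧d₁ satisfies the classical Yang-Baxter equation [r,r] = 0, but the associated coboundary ξ(x) = ad_x r fails the metaflatness condition: ad_s² ξ(s) = −z∧d₂ ≠ 0. -/

import Mathlib

open ExteriorAlgebra

/-- For the 4-dimensional Lie algebra with basis `{s, z, d₁, d₂}`, nonzero
brackets `[s,d₁]=d₂`, `[s,d₂]=−d₁` and `z` central, the bivector `r = z∧d₁` satisfies
the classical Yang–Baxter equation `[r,r] = 0`, but the coboundary `ξ(x) = ad_x r`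
fails metaflatness: `ad_s² ξ(s) = −z∧d₂ ≠ 0`. -/
theorem stmt_8 {L : Type*} [LieRing L] [LieAlgebra ℝ L]
    (s z d1 d2 : L) (b : Module.Basis (Fin 4) ℝ L)
    (hb0 : b 0 = s) (hb1 : b 1 = z) (hb2 : b 2 = d1) (hb3 : b 3 = d2)
    (h1 : ⁅s, d1⁆ = d2) (h2 : ⁅s, d2⁆ = -d1) (h3 : ⁅d1, d2⁆ = 0)
    (hz : ∀ y : L, ⁅z, y⁆ = 0)
    -- the algebraic Schouten bracket on bivectors
    (S : ExteriorAlgebra ℝ L →ₗ[ℝ] ExteriorAlgebra ℝ L →ₗ[ℝ] ExteriorAlgebra ℝ L)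
    (hS : ∀ x1 x2 y1 y2 : L, S (ι ℝ x1 * ι ℝ x2) (ι ℝ y1 * ι ℝ y2) =
      ι ℝ ⁅x1, y1⁆ * ι ℝ x2 * ι ℝ y2 - ι ℝ ⁅x1, y2⁆ * ι ℝ x2 * ι ℝ y1
        - ι ℝ ⁅x2, y1⁆ * ι ℝ x1 * ι ℝ y2 + ι ℝ ⁅x2, y2⁆ * ι ℝ x1 * ι ℝ y1)
    -- the derivation extension of `ad` to bivectors
    (A : L →ₗ[ℝ] ExteriorAlgebra ℝ L →ₗ[ℝ] ExteriorAlgebra ℝ L)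
    (hA : ∀ x u v : L, A x (ι ℝ u * ι ℝ v) = ι ℝ ⁅x, u⁆ * ι ℝ v + ι ℝ u * ι ℝ ⁅x, v⁆)
    (r : ExteriorAlgebra ℝ L) (hr : r = ι ℝ z * ι ℝ d1) :
    S r r = 0 ∧ A s (A s (A s r)) = -(ι ℝ z * ι ℝ d2) ∧ ι ℝ z * ι ℝ d2 ≠ 0 := by
  have hd1z : ⁅d1, z⁆ = 0 := by rw [← neg_eq_zero, ← lie_skew, hz]; simp
  have hsz : ⁅s, z⁆ = 0 := by rw [← neg_eq_zero, ← lie_skew, hz]; simp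
  refine ⟨?_, ?_, ?_⟩
  · rw [hr, hS, hz, hz, hd1z, lie_self]
    simp only [map_zero, zero_mul, sub_zero, add_zero, sub_self, zero_add, neg_neg, neg_zero]
  · have step1 : A s r = ι ℝ z * ι ℝ d2 := by
      rw [hr, hA, hsz, h1]
      simp
    have step2 : A s (ι ℝ z * ι ℝ d2) = -(ι ℝ z * ι ℝ d1) := by
      rw [hA, hsz, h2]
      simp only [map_zero, zero_mul, map_neg, mul_neg, zero_add]
    rw [step1, step2, map_neg, ← hr, step1]
  · -- build an alternating form detecting `z ∧ d2`
    intro hzero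
    set f : L →ₗ[ℝ] (Fin 2 → ℝ) := LinearMap.pi ![b.coord 1, b.coord 3] with hf
    set φ : L [⋀^Fin 2]→ₗ[ℝ] ℝ :=
      (Matrix.detRowAlternating (R := ℝ) (n := Fin 2)).compLinearMap f with hφ
    set F : ∀ i, L [⋀^Fin i]→ₗ[ℝ] ℝ := fun i =>
      match i with
      | 2 => φ
      | _ => 0 with hF
    have hlift : liftAlternating F (ι ℝ z * ι ℝ d2) = φ ![z, d2] := by
      rw [liftAlternating_ι_mul, liftAlternating_ι]
      rfl
    have hval : φ ![z, d2] = 1 := by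
      rw [hφ]
      simp only [AlternatingMap.compLinearMap_apply]
      have : (f ∘ ![z, d2]) = ![![(1:ℝ), 0], ![0, 1]] := by
        funext i j
        fin_cases i <;> fin_cases j <;>
          simp [hf, ← hb1, ← hb3, Module.Basis.coord_apply, Module.Basis.repr_self]
      rw [show (fun i => f (![z, d2] i)) = ⇑f ∘ ![z, d2] from rfl, this]
      show Matrix.det (Matrix.of ![![(1:ℝ),0],![0,1]]) = 1
      rw [Matrix.det_fin_two]
      norm_num
    rw [hzero, map_zero] at hlift
    rw [hval] at hlift
    exact one_ne_zero hlift.symm
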